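/- Let n ≥ 1, s ∈ (0,1), let Ω ⊆ ℝⁿ be a bounded measurable set with 0 < |Ω| < ∞, and let u : ℝⁿ → ℝ be measurable and bounded on Ω. Then (∫_Ω u(y)|x−y|^{−(n+2s)} dy) / (∫_Ω |x−y|^{−(n+2s)} dy) → (1/|Ω|) ∫_Ω u(y) dy as |x| → ∞. -/

import Mathlib

open MeasureTheory Filter

lemma aux_weighted (n : ℕ) (p : ℝ) (hp : 0 < p)
    (Ω : Set (EuclideanSpace ℝ (Fin n))) (hΩ : MeasurableSet Ω)
    (hΩb : Bornology.IsBounded Ω) (hΩfin : volume Ω < ⊤)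
    (v : EuclideanSpace ℝ (Fin n) → ℝ) (hv : Measurable v) (C : ℝ)
    (hC : ∀ y ∈ Ω, |v y| ≤ C) :
    Tendsto (fun x : EuclideanSpace ℝ (Fin n) =>
        ∫ y in Ω, v y * dist x y ^ (-p) * ‖x‖ ^ p)
      (Filter.comap (fun x : EuclideanSpace ℝ (Fin n) => ‖x‖) atTop)
      (nhds (∫ y in Ω, v y)) := by
  set l : Filter (EuclideanSpace ℝ (Fin n)) :=
    Filter.comap (fun x : EuclideanSpace ℝ (Fin n) => ‖x‖) atTop with hl
  have hnorm : Tendsto (fun x : EuclideanSpace ℝ (Fin n) => ‖x‖) l atTop := tendsto_comap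
  obtain ⟨R0, hR0⟩ := hΩb.subset_closedBall 0
  set R : ℝ := max R0 0 with hRdef
  have hR : Ω ⊆ Metric.closedBall 0 R :=
    hR0.trans (Metric.closedBall_subset_closedBall (le_max_left _ _))
  have hRnn : 0 ≤ R := le_max_right _ _
  apply tendsto_integral_filter_of_dominated_convergence (bound := fun _ => C * 2 ^ p)
  · -- measurability
    filter_upwards with x
    exact ((hv.mul ((measurable_const.dist measurable_id).pow_const (-p))).mul_const
      _).aestronglyMeasurable
  · -- bound
    filter_upwards [hnorm.eventually (eventually_ge_atTop (2 * R + 1))] with x hx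
    refine (ae_restrict_iff' hΩ).2 (ae_of_all _ fun y hy => ?_)
    have hyR : ‖y‖ ≤ R := by
      have := hR hy
      simpa [Metric.mem_closedBall, dist_eq_norm] using this
    have hd : ‖x‖ / 2 ≤ dist x y := by
      have h1 : ‖x‖ - ‖y‖ ≤ ‖x - y‖ := norm_sub_norm_le x y
      rw [dist_eq_norm]
      linarith
    have hdpos : 0 < dist x y := by linarith
    have hxpos : 0 < ‖x‖ := by linarith
    have hkey : dist x y ^ (-p) * ‖x‖ ^ p = (‖x‖ / dist x y) ^ p := by
      rw [Real.div_rpow (norm_nonneg x) dist_nonneg, Real.rpow_neg dist_nonneg]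
      ring
    have hratio : ‖x‖ / dist x y ≤ 2 := by
      rw [div_le_iff₀ hdpos]; linarith
    have hCnn : 0 ≤ C := (abs_nonneg _).trans (hC y hy)
    calc ‖v y * dist x y ^ (-p) * ‖x‖ ^ p‖
        = |v y| * (dist x y ^ (-p) * ‖x‖ ^ p) := by
          rw [Real.norm_eq_abs, abs_mul, abs_mul, mul_assoc,
            abs_of_nonneg (Real.rpow_nonneg dist_nonneg _),
            abs_of_nonneg (Real.rpow_nonneg (norm_nonneg x) _)]
      _ ≤ C * 2 ^ p := by
          rw [hkey]
          exact mul_le_mul (hC y hy)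
            (Real.rpow_le_rpow (div_nonneg (norm_nonneg x) dist_nonneg) hratio hp.le)
            (Real.rpow_nonneg (div_nonneg (norm_nonneg x) dist_nonneg) _) hCnn
  · -- bound integrable
    exact (integrableOn_const hΩfin.ne enorm_ne_top)
  · -- pointwise limit
    refine ae_of_all _ fun y => ?_
    have h0 : Tendsto (fun x : EuclideanSpace ℝ (Fin n) => (dist x y - ‖x‖) / ‖x‖) l
        (nhds 0) := by
      apply squeeze_zero_norm' (a := fun x => ‖y‖ / ‖x‖)
      · filter_upwards [hnorm.eventually (eventually_ge_atTop 1)] with x hx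
        have hxpos : (0:ℝ) < ‖x‖ := by linarith
        rw [Real.norm_eq_abs, abs_div, abs_of_pos hxpos]
        gcongr
        rw [dist_eq_norm]
        simpa [sub_sub_cancel_left] using abs_norm_sub_norm_le (x - y) x
      · exact Tendsto.div_atTop tendsto_const_nhds hnorm
    have h2 : Tendsto (fun x : EuclideanSpace ℝ (Fin n) => dist x y / ‖x‖) l (nhds 1) := by
      have := h0.add_const 1
      rw [zero_add] at this
      apply this.congr'
      filter_upwards [hnorm.eventually (eventually_ge_atTop 1)] with x hx
      have hxne : ‖x‖ ≠ 0 := by positivity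
      field_simp
      ring
    have h3 : Tendsto (fun x : EuclideanSpace ℝ (Fin n) => (dist x y / ‖x‖) ^ (-p)) l
        (nhds 1) := by
      have := h2.rpow_const (p := -p) (Or.inl one_ne_zero)
      simpa using this
    have h4 : Tendsto (fun x : EuclideanSpace ℝ (Fin n) =>
        v y * dist x y ^ (-p) * ‖x‖ ^ p) l (nhds (v y)) := by
      have := (tendsto_const_nhds (x := v y)).mul h3
      rw [mul_one] at this
      apply this.congr'
      filter_upwards [hnorm.eventually (eventually_ge_atTop (‖y‖ + 1))] with x hx
      have hxpos : (0:ℝ) < ‖x‖ := by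
        have := norm_nonneg y; linarith
      have hdpos : 0 < dist x y := by
        have h1 : ‖x‖ - ‖y‖ ≤ ‖x - y‖ := norm_sub_norm_le x y
        rw [dist_eq_norm]; linarith
      rw [Real.div_rpow dist_nonneg hxpos.le, Real.rpow_neg hxpos.le, div_eq_mul_inv, inv_inv, ← mul_assoc]
    exact h4

/-- As `|x| → ∞`, the weighted average of a bounded measurable function `u` against the
kernel `|x-y|^{-(n+2s)}` over a bounded set `Ω` of positive finite measure tends to the
mean value `(1/|Ω|) ∫_Ω u`. -/
theorem weighted_average_tendsto_mean (n : ℕ) (hn : 1 ≤ n) (s : ℝ)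
    (hs : s ∈ Set.Ioo (0 : ℝ) 1)
    (Ω : Set (EuclideanSpace ℝ (Fin n))) (hΩ : MeasurableSet Ω)
    (hΩb : Bornology.IsBounded Ω) (hΩpos : 0 < volume Ω) (hΩfin : volume Ω < ⊤)
    (u : EuclideanSpace ℝ (Fin n) → ℝ) (hu : Measurable u) (M : ℝ)
    (hM : ∀ y ∈ Ω, |u y| ≤ M) :
    Tendsto (fun x : EuclideanSpace ℝ (Fin n) =>
        (∫ y in Ω, u y * dist x y ^ (-((n : ℝ) + 2 * s))) /
          ∫ y in Ω, dist x y ^ (-((n : ℝ) + 2 * s)))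
      (Filter.comap (fun x => ‖x‖) atTop)
      (nhds ((volume Ω).toReal⁻¹ * ∫ y in Ω, u y)) := by
  have hp : 0 < (n : ℝ) + 2 * s := by
    have h1 : (1 : ℝ) ≤ (n : ℝ) := by exact_mod_cast hn
    have h2 := hs.1
    linarith
  set p : ℝ := (n : ℝ) + 2 * s with hpdef
  have hA := aux_weighted n p hp Ω hΩ hΩb hΩfin u hu M hM
  have hB := aux_weighted n p hp Ω hΩ hΩb hΩfin (fun _ => (1 : ℝ)) measurable_const 1
    (fun y _ => by simp)
  simp only [one_mul] at hB
  rw [setIntegral_const, smul_eq_mul, mul_one] at hB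
  have hB0 : (volume Ω).toReal ≠ 0 := (ENNReal.toReal_pos hΩpos.ne' hΩfin.ne).ne'
  have hdiv := hA.div hB hB0
  rw [← div_eq_inv_mul]
  refine hdiv.congr' ?_
  have hnorm : Tendsto (fun x : EuclideanSpace ℝ (Fin n) => ‖x‖)
      (Filter.comap (fun x : EuclideanSpace ℝ (Fin n) => ‖x‖) atTop) atTop := tendsto_comap
  filter_upwards [hnorm.eventually (eventually_ge_atTop 1)] with x hx
  have hxp : ‖x‖ ^ p ≠ 0 := (Real.rpow_pos_of_pos (by linarith) p).ne'
  simp only [Pi.div_apply]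
  rw [integral_mul_const, integral_mul_const, mul_div_mul_right _ _ hxp]
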